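/- Let n ≥ 1 and let f : [0,1]^n → ℝ be an arbitrary continuous function. Then there exist continuous univariate functions Φ_q : ℝ → ℝ for q = 1, …, 2n+1 and continuous univariate functions φ_{qp} : [0,1] → ℝ for q = 1, …, 2n+1 and p = 1, …, n, such that for every (x_1, …, x_n) ∈ [0,1]^n, f(x_1, …, x_n) = Σ_{q=1}^{2n+1} Φ_q( Σ_{p=1}^{n} φ_{qp}(x_p) ). -/

import Mathlib

open Set

namespace KA

/-- Plateau function: monotone, surjective, equals `⌊v⌋ + 1/2` when `fract v ∈ [1/(2m), 1]`. -/
noncomputable def plat (m : ℕ) (v : ℝ) : ℝ := ⌊v⌋ + min 1 (2 * m * Int.fract v) - 1/2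

lemma plat_mono (m : ℕ) : Monotone (plat m) := by
  intro v w hvw
  rcases lt_or_ge v (⌊w⌋ : ℝ) with h | h
  · have hlt : ⌊v⌋ < ⌊w⌋ := Int.floor_lt.2 (by exact_mod_cast h)
    have h1 : (⌊v⌋ : ℝ) ≤ (⌊w⌋ : ℝ) - 1 := by
      have h' : ⌊v⌋ ≤ ⌊w⌋ - 1 := by omega
      have : ((⌊v⌋:ℤ):ℝ) ≤ ((⌊w⌋ - 1 : ℤ):ℝ) := Int.cast_le.2 h'
      push_cast at this; linarith
    have h2 : min 1 (2 * m * Int.fract v) ≤ 1 := min_le_left _ _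
    have h3 : (0:ℝ) ≤ min 1 (2 * m * Int.fract w) :=
      le_min zero_le_one (mul_nonneg (by positivity) (Int.fract_nonneg w))
    unfold plat; nlinarith
  · have hfl : ⌊v⌋ = ⌊w⌋ := le_antisymm (Int.floor_le_floor hvw)
      (Int.le_floor.2 (by exact_mod_cast h))
    have hfr : Int.fract v ≤ Int.fract w := by
      unfold Int.fract; rw [hfl]; linarith
    unfold plat
    rw [hfl]
    have : min 1 (2 * m * Int.fract v) ≤ min 1 (2 * m * Int.fract w) :=
      min_le_min le_rfl (by nlinarith [Int.fract_nonneg v])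
    linarith

lemma plat_surj (m : ℕ) (hm : 1 ≤ m) : Function.Surjective (plat m) := by
  intro y
  set j : ℤ := ⌊y + 1/2⌋ with hj
  set s : ℝ := y + 1/2 - j with hs
  have hs0 : 0 ≤ s := by
    have := Int.floor_le (y + 1/2); simp only [hs]; linarith
  have hs1 : s < 1 := by
    have := Int.lt_floor_add_one (y + 1/2); simp only [hs]; linarith
  have hm1 : (1:ℝ) ≤ m := by exact_mod_cast hm
  refine ⟨(j : ℝ) + s / (2 * m), ?_⟩
  have hd0 : 0 ≤ s / (2*m) := by positivity
  have hd1 : s / (2*m) < 1 := (div_lt_one (by nlinarith)).2 (by nlinarith)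
  have hfr : Int.fract ((j:ℝ) + s / (2*m)) = s / (2*m) := by
    rw [Int.fract_intCast_add, Int.fract_eq_self.2 ⟨hd0, hd1⟩]
  have hfl : ⌊(j:ℝ) + s / (2*m)⌋ = j := by
    rw [Int.floor_intCast_add, Int.floor_eq_zero_iff.2 ⟨hd0, hd1⟩, add_zero]
  unfold plat
  rw [hfr, hfl]
  have hms : 2 * (m:ℝ) * (s / (2*m)) = s := by field_simp
  rw [hms, min_eq_right (le_of_lt hs1)]
  simp only [hs]
  ring

lemma plat_continuous (m : ℕ) (hm : 1 ≤ m) : Continuous (plat m) :=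
  (plat_mono m).continuous_of_surjective (plat_surj m hm)

lemma plat_sub_le (m : ℕ) (v : ℝ) : |plat m v - v| ≤ 3/2 := by
  have h1 := Int.floor_le v
  have h2 := Int.lt_floor_add_one v
  have h3 : (0:ℝ) ≤ min 1 (2 * m * Int.fract v) :=
    le_min zero_le_one (mul_nonneg (by positivity) (Int.fract_nonneg v))
  have h4 : min 1 (2 * m * Int.fract v) ≤ 1 := min_le_left _ _
  rw [abs_le]; unfold plat; constructor <;> nlinarith

/-- The key plateau property. -/
lemma plat_eq (m : ℕ) (hm : 1 ≤ m) (u : ℝ)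
    (h1 : 1/(4*m) ≤ Int.fract u) (h2 : Int.fract u ≤ 1 - 1/(4*m)) :
    plat m (u + 1/(4*m)) = ⌊u⌋ + 1/2 := by
  have hm1 : (1:ℝ) ≤ m := by exact_mod_cast hm
  set s : ℝ := Int.fract u + 1/(4*m) with hsdef
  have hu : u + 1/(4*m) = (⌊u⌋ : ℝ) + s := by
    have := Int.floor_add_fract u; simp only [hsdef]; linarith
  rcases lt_or_ge s 1 with hs | hs
  · have hs0 : 0 ≤ s := by
      have := Int.fract_nonneg u; simp only [hsdef]; positivity
    have hfr : Int.fract (u + 1/(4*m)) = s := by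
      rw [hu, Int.fract_intCast_add, Int.fract_eq_self.2 ⟨hs0, hs⟩]
    have hfl : ⌊u + 1/(4*m)⌋ = ⌊u⌋ := by
      rw [hu, Int.floor_intCast_add, Int.floor_eq_zero_iff.2 ⟨hs0, hs⟩, add_zero]
    unfold plat
    have hinv : 2*(m:ℝ) * (1/(4*m)) = 1/2 := by field_simp; ring
    have hge : 1 ≤ 2 * (m:ℝ) * s := by
      have := mul_le_mul_of_nonneg_left h1 (by positivity : (0:ℝ) ≤ 2*m)
      simp only [hsdef]; nlinarith
    rw [hfr, hfl, min_eq_left hge]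
    ring
  · have hs1 : s ≤ 1 := by simp only [hsdef]; linarith
    have hseq : s = 1 := le_antisymm hs1 hs
    have hu1 : u + 1/(4*m) = ((⌊u⌋ + 1 : ℤ) : ℝ) := by rw [hu, hseq]; push_cast; ring
    unfold plat
    rw [hu1, Int.fract_intCast, Int.floor_intCast]
    push_cast; ring_nf
    norm_num


/-- `t` is "good" for shift `q` at rank `N`: away from the gaps of system `q`. -/
def good (m N q : ℕ) (t : ℝ) : Prop :=
  1/(4*m) ≤ Int.fract ((N:ℝ)*t - q/m) ∧ Int.fract ((N:ℝ)*t - q/m) ≤ 1 - 1/(4*m)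

lemma bad_near (m N q : ℕ) (hm : 1 ≤ m) (t : ℝ) (h : ¬ good m N q t) :
    ∃ z : ℤ, |((N:ℝ)*t - q/m) - z| < 1/(4*m) := by
  have hm0 : (0:ℝ) < 1/(4*m) := by
    have : (0:ℝ) < m := by exact_mod_cast hm
    positivity
  rw [good, not_and_or] at h
  set u : ℝ := (N:ℝ)*t - q/m with hu
  clear_value u
  have h2 : Int.fract u = u - ⌊u⌋ := (Int.self_sub_floor u).symm
  have h4 := Int.fract_lt_one u
  have h5 := Int.fract_nonneg u
  rcases h with h1 | h1
  · have h3 := lt_of_not_ge h1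
    exact ⟨⌊u⌋, by rw [abs_sub_lt_iff]; constructor <;> linarith⟩
  · have h3 := lt_of_not_ge h1
    refine ⟨⌊u⌋ + 1, ?_⟩
    rw [abs_sub_lt_iff]
    push_cast
    constructor <;> linarith

lemma good_or_good (m N : ℕ) (hm : 1 ≤ m) {q q' : ℕ} (hq : q < m) (hq' : q' < m)
    (hne : q ≠ q') (t : ℝ) : good m N q t ∨ good m N q' t := by
  by_contra hcon
  push_neg at hcon
  obtain ⟨z, hz⟩ := bad_near m N q hm t hcon.1
  obtain ⟨z', hz'⟩ := bad_near m N q' hm t hcon.2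
  have hm0 : (0:ℝ) < m := by exact_mod_cast hm
  have key : |(((q':ℤ) - q : ℤ):ℝ)/m - ((z - z' : ℤ):ℝ)| < 1/(2*m) := by
    have heq : (((q':ℤ) - q : ℤ):ℝ)/m - ((z - z' : ℤ):ℝ)
        = (((N:ℝ)*t - q/m) - z) - (((N:ℝ)*t - q'/m) - z') := by
      push_cast
      field_simp
      ring
    rw [heq]
    calc |(((N:ℝ)*t - q/m) - z) - (((N:ℝ)*t - q'/m) - z')|
        ≤ |((N:ℝ)*t - q/m) - z| + |((N:ℝ)*t - q'/m) - z'| := abs_sub _ _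
    _ < 1/(4*m) + 1/(4*m) := add_lt_add hz hz'
    _ = 1/(2*m) := by field_simp; try ring
  have key2 : |((((q':ℤ) - q) - m*(z - z') : ℤ) : ℝ)| < 1/2 := by
    have heq : ((((q':ℤ) - q) - m*(z - z') : ℤ) : ℝ)
        = m * ((((q':ℤ) - q : ℤ):ℝ)/m - ((z - z' : ℤ):ℝ)) := by
      push_cast
      field_simp
      try ring
    rw [heq, abs_mul, abs_of_pos hm0]
    have := mul_lt_mul_of_pos_left key hm0
    calc (m:ℝ) * |(((q':ℤ) - q : ℤ):ℝ)/m - ((z - z' : ℤ):ℝ)| < m * (1/(2*m)) := this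
    _ = 1/2 := by field_simp; try ring
  have hz0 : ((q':ℤ) - q) - (m:ℤ)*(z - z') = 0 := by
    have habs : |((q':ℤ) - q) - (m:ℤ)*(z - z')| < 1 := by
      by_contra hc
      push_neg at hc
      have : (1:ℝ) ≤ |((((q':ℤ) - q) - m*(z - z') : ℤ) : ℝ)| := by
        rw [← Int.cast_abs]
        exact_mod_cast hc
      linarith
    exact Int.abs_lt_one_iff.mp habs
  have h5 : (q':ℤ) - q = (m:ℤ) * (z - z') := by omega
  have hwlt : z - z' < 1 := by nlinarith [h5, (by omega : (q':ℤ) - q < m)]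
  have hwgt : -1 < z - z' := by nlinarith [h5, (by omega : -(m:ℤ) < (q':ℤ) - q)]
  have hw0 : z - z' = 0 := by omega
  rw [hw0, mul_zero] at h5
  omega

/-- Base-K digit uniqueness. -/
lemma digits_inj : ∀ (n : ℕ) (K : ℤ) (d : Fin n → ℤ), (∀ p, |d p| < K) →
    (∑ p : Fin n, K^(p:ℕ) * d p = 0) → ∀ p, d p = 0 := by
  intro n
  induction n with
  | zero => intro K d _ _ p; exact p.elim0
  | succ n ih =>
    intro K d hlt hsum p
    have hK : 0 < K := lt_of_le_of_lt (abs_nonneg _) (hlt 0)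
    rw [Fin.sum_univ_succ] at hsum
    simp only [Fin.val_zero, pow_zero, one_mul] at hsum
    have hfact : ∑ i : Fin n, K^(((i.succ : Fin (n+1)) : ℕ)) * d i.succ
        = K * ∑ i : Fin n, K^(i:ℕ) * d i.succ := by
      rw [Finset.mul_sum]
      congr 1
      funext i
      rw [Fin.val_succ, pow_succ]
      ring
    rw [hfact] at hsum
    set S : ℤ := ∑ i : Fin n, K^(i:ℕ) * d i.succ with hS
    have hd0 : d 0 = -(K * S) := by linarith [hsum]
    have hS0 : S = 0 := by
      have h1 : |d 0| < K := hlt 0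
      rw [hd0, abs_neg, abs_mul, abs_of_pos hK] at h1
      have habs : |S| < 1 := by
        by_contra hc
        push_neg at hc
        nlinarith [abs_nonneg S]
      exact Int.abs_lt_one_iff.mp habs
    have hrest := ih K (fun i => d i.succ) (fun i => hlt i.succ) (by rw [← hS, hS0])
    refine Fin.cases ?_ ?_ p
    · rw [hd0, hS0]; ring
    · exact hrest

/-- Shifted plateau. -/
noncomputable def gp (m : ℕ) (u : ℝ) : ℝ := plat m (u + 1/(4*m))

lemma gp_continuous (m : ℕ) (hm : 1 ≤ m) : Continuous (gp m) :=
  (plat_continuous m hm).comp (by continuity)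

lemma gp_sub_le (m : ℕ) (hm : 1 ≤ m) (u : ℝ) : |gp m u - u| ≤ 2 := by
  have h1 := plat_sub_le m (u + 1/(4*m))
  have hm1 : (1:ℝ) ≤ m := by exact_mod_cast hm
  have h2 : (0:ℝ) < 1/(4*m) := by positivity
  have h3 : 1/(4*(m:ℝ)) ≤ 1/4 := by
    rw [div_le_div_iff₀ (by positivity) (by norm_num)]
    nlinarith
  rw [abs_le] at h1 ⊢
  unfold gp
  constructor <;> nlinarith [h1.1, h1.2]

lemma gp_eq (m : ℕ) (hm : 1 ≤ m) (u : ℝ)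
    (h1 : 1/(4*m) ≤ Int.fract u) (h2 : Int.fract u ≤ 1 - 1/(4*m)) :
    gp m u = ⌊u⌋ + 1/2 := plat_eq m hm u h1 h2

/-- The snapping map of system `q` at rank `N`. -/
noncomputable def sig (m N q : ℕ) (t : ℝ) : ℝ := (gp m ((N:ℝ)*t - q/m) + q/m)/N

lemma sig_continuous (m N q : ℕ) (hm : 1 ≤ m) : Continuous (sig m N q) := by
  unfold sig
  exact (((gp_continuous m hm).comp (by continuity)).add continuous_const).div_const _

lemma sig_sub_le (m N q : ℕ) (hm : 1 ≤ m) (hN : 1 ≤ N) (t : ℝ) :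
    |sig m N q t - t| ≤ 2/N := by
  have hN0 : (0:ℝ) < N := by exact_mod_cast hN
  have : sig m N q t - t = (gp m ((N:ℝ)*t - q/m) - ((N:ℝ)*t - q/m))/N := by
    unfold sig; field_simp; ring
  rw [this, abs_div, abs_of_pos hN0]
  gcongr
  exact gp_sub_le m hm _

/-- Center of the `j`-th interval of system `q` at rank `N`. -/
noncomputable def cen (m N q : ℕ) (j : ℤ) : ℝ := ((j:ℝ) + 1/2 + q/m)/N

lemma sig_eq_cen (m N q : ℕ) (hm : 1 ≤ m) (t : ℝ) (h : good m N q t) :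
    sig m N q t = cen m N q ⌊(N:ℝ)*t - q/m⌋ := by
  unfold sig cen
  rw [gp_eq m hm _ h.1 h.2]

lemma floor_mem_Icc (m N q : ℕ) (hm : 1 ≤ m) (hq : q < m) (t : ℝ)
    (ht : t ∈ Icc (0:ℝ) 1) : ⌊(N:ℝ)*t - q/m⌋ ∈ Finset.Icc (-1 : ℤ) (N : ℤ) := by
  have hm0 : (0:ℝ) < m := by exact_mod_cast hm
  have hq1 : (q:ℝ)/m < 1 := (div_lt_one hm0).2 (by exact_mod_cast hq)
  have hq0 : (0:ℝ) ≤ (q:ℝ)/m := by positivity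
  have hN0 : (0:ℝ) ≤ N := by positivity
  obtain ⟨ht0, ht1⟩ := ht
  rw [Finset.mem_Icc]
  constructor
  · apply Int.le_floor.2
    push_cast
    nlinarith
  · have : (N:ℝ)*t - q/m ≤ N := by nlinarith
    calc ⌊(N:ℝ)*t - q/m⌋ ≤ ⌊(N:ℝ)⌋ := Int.floor_le_floor this
    _ = N := Int.floor_natCast N

/-! ### Setup for the Baire-category argument -/

/-- The clamp to `[0,1]`. -/
noncomputable def clmp (a : ℝ) : ℝ := max 0 (min 1 a)

lemma clmp_mem (a : ℝ) : clmp a ∈ Icc (0:ℝ) 1 :=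
  ⟨le_max_left _ _, max_le (by norm_num) (min_le_left _ _)⟩

lemma clmp_of_mem {a : ℝ} (h : a ∈ Icc (0:ℝ) 1) : clmp a = a := by
  unfold clmp
  rw [min_eq_right h.2, max_eq_right h.1]

lemma clmp_lipschitz (a b : ℝ) : |clmp a - clmp b| ≤ |a - b| := by
  unfold clmp
  calc |max 0 (min 1 a) - max 0 (min 1 b)| ≤ max |(0:ℝ) - 0| |min 1 a - min 1 b| :=
        abs_max_sub_max_le_max _ _ _ _
  _ ≤ max |(0:ℝ) - 0| (max |(1:ℝ) - 1| |a - b|) := by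
      apply max_le_max le_rfl
      exact abs_min_sub_min_le_max _ _ _ _
  _ ≤ |a - b| := by
      apply max_le (by simp)
      apply max_le (by simp)
      exact le_rfl

lemma clmp_continuous : Continuous clmp := by
  unfold clmp
  exact continuous_const.max (continuous_const.min continuous_id)

/-- Clamp into the subtype `[0,1]`. -/
noncomputable def clmpI (a : ℝ) : Icc (0:ℝ) 1 := ⟨clmp a, clmp_mem a⟩

lemma clmpI_continuous : Continuous clmpI :=
  Continuous.subtype_mk clmp_continuous _

/-- The cube. -/
abbrev QQ (n : ℕ) : Set (Fin n → ℝ) := Icc (0 : Fin n → ℝ) 1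

instance QQ_compact (n : ℕ) : CompactSpace (QQ n) :=
  isCompact_iff_compactSpace.mp isCompact_Icc

instance II_compact : CompactSpace (Icc (0:ℝ) 1) :=
  isCompact_iff_compactSpace.mp isCompact_Icc

instance QQ_nonempty (n : ℕ) : Nonempty (QQ n) :=
  ⟨⟨0, le_refl _, fun _ => zero_le_one⟩⟩

lemma coord_mem {n : ℕ} (x : QQ n) (p : Fin n) : (x : Fin n → ℝ) p ∈ Icc (0:ℝ) 1 := by
  obtain ⟨x, hx0, hx1⟩ := x
  exact ⟨by simpa using hx0 p, by simpa using hx1 p⟩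

/-- The Baire space of inner-function tuples. -/
abbrev XX (n : ℕ) : Type := (Fin (2*n+1) × Fin n) → C(Icc (0:ℝ) 1, ℝ)

/-- The inner sums. -/
noncomputable def yval {n : ℕ} (Ψ : XX n) (q : Fin (2*n+1)) (x : QQ n) : ℝ :=
  ∑ p : Fin n, Ψ (q, p) ⟨(x : Fin n → ℝ) p, coord_mem x p⟩

lemma yval_continuous {n : ℕ} (Ψ : XX n) (q : Fin (2*n+1)) : Continuous (yval Ψ q) := by
  apply continuous_finset_sum
  intro p _
  exact (Ψ (q, p)).continuous.comp (Continuous.subtype_mk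
    ((continuous_apply p).comp continuous_subtype_val) _)

/-- The approximation sets for the Baire argument. -/
def EE (n k : ℕ) (f : C(QQ n, ℝ)) : Set (XX n) :=
  {Ψ | ∃ g : Fin (2*n+1) → ℝ → ℝ, (∀ q, Continuous (g q)) ∧
    (∀ q y, |g q y| ≤ ‖f‖/(n+1)) ∧
    ∀ x : QQ n, |f x - ∑ q : Fin (2*n+1), g q (yval Ψ q x)| < (n/(n+1)) * ‖f‖ + 1/(k+1)}

lemma yval_dist_le {n : ℕ} (Ψ Ψ' : XX n) (q : Fin (2*n+1)) (x : QQ n) :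
    |yval Ψ' q x - yval Ψ q x| ≤ n * dist Ψ' Ψ := by
  unfold yval
  rw [← Finset.sum_sub_distrib]
  calc |∑ p : Fin n, (Ψ' (q,p) ⟨(x : Fin n → ℝ) p, coord_mem x p⟩
        - Ψ (q,p) ⟨(x : Fin n → ℝ) p, coord_mem x p⟩)|
      ≤ ∑ p : Fin n, |Ψ' (q,p) ⟨(x : Fin n → ℝ) p, coord_mem x p⟩
        - Ψ (q,p) ⟨(x : Fin n → ℝ) p, coord_mem x p⟩| := Finset.abs_sum_le_sum_abs _ _
  _ ≤ ∑ _p : Fin n, dist Ψ' Ψ := by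
      apply Finset.sum_le_sum
      intro p _
      calc |Ψ' (q,p) ⟨(x : Fin n → ℝ) p, coord_mem x p⟩
            - Ψ (q,p) ⟨(x : Fin n → ℝ) p, coord_mem x p⟩|
          = dist (Ψ' (q,p) ⟨(x : Fin n → ℝ) p, coord_mem x p⟩)
            (Ψ (q,p) ⟨(x : Fin n → ℝ) p, coord_mem x p⟩) := (Real.dist_eq _ _).symm
      _ ≤ dist (Ψ' (q,p)) (Ψ (q,p)) := ContinuousMap.dist_apply_le_dist _
      _ ≤ dist Ψ' Ψ := dist_le_pi_dist _ _ _
  _ = n * dist Ψ' Ψ := by simp [Finset.sum_const, Finset.card_univ, mul_comm]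

lemma yval_bound {n : ℕ} (Ψ Ψ' : XX n) (hd : dist Ψ' Ψ ≤ 1) (q : Fin (2*n+1)) (x : QQ n) :
    |yval Ψ' q x| ≤ (∑ qp : Fin (2*n+1) × Fin n, ‖Ψ qp‖) + n := by
  unfold yval
  calc |∑ p : Fin n, Ψ' (q,p) ⟨(x : Fin n → ℝ) p, coord_mem x p⟩|
      ≤ ∑ p : Fin n, |Ψ' (q,p) ⟨(x : Fin n → ℝ) p, coord_mem x p⟩| :=
        Finset.abs_sum_le_sum_abs _ _
  _ ≤ ∑ p : Fin n, (‖Ψ (q,p)‖ + 1) := by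
      apply Finset.sum_le_sum
      intro p _
      have h1 : |Ψ' (q,p) ⟨(x : Fin n → ℝ) p, coord_mem x p⟩
          - Ψ (q,p) ⟨(x : Fin n → ℝ) p, coord_mem x p⟩| ≤ 1 := by
        calc |Ψ' (q,p) ⟨(x : Fin n → ℝ) p, coord_mem x p⟩
              - Ψ (q,p) ⟨(x : Fin n → ℝ) p, coord_mem x p⟩|
            = dist (Ψ' (q,p) ⟨(x : Fin n → ℝ) p, coord_mem x p⟩)
              (Ψ (q,p) ⟨(x : Fin n → ℝ) p, coord_mem x p⟩) := (Real.dist_eq _ _).symm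
        _ ≤ dist (Ψ' (q,p)) (Ψ (q,p)) := ContinuousMap.dist_apply_le_dist _
        _ ≤ dist Ψ' Ψ := dist_le_pi_dist _ _ _
        _ ≤ 1 := hd
      have h2 : |Ψ (q,p) ⟨(x : Fin n → ℝ) p, coord_mem x p⟩| ≤ ‖Ψ (q,p)‖ :=
        (Ψ (q,p)).norm_coe_le_norm _
      calc |Ψ' (q,p) ⟨(x : Fin n → ℝ) p, coord_mem x p⟩|
          ≤ |Ψ (q,p) ⟨(x : Fin n → ℝ) p, coord_mem x p⟩| + 1 := by
            have := abs_sub_abs_le_abs_sub (Ψ' (q,p) ⟨(x : Fin n → ℝ) p, coord_mem x p⟩)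
              (Ψ (q,p) ⟨(x : Fin n → ℝ) p, coord_mem x p⟩)
            linarith
      _ ≤ ‖Ψ (q,p)‖ + 1 := by linarith
  _ ≤ (∑ qp : Fin (2*n+1) × Fin n, ‖Ψ qp‖) + n := by
      rw [Finset.sum_add_distrib]
      simp only [Finset.sum_const, Finset.card_univ, Fintype.card_fin, nsmul_eq_mul, mul_one]
      gcongr
      rw [Fintype.sum_prod_type]
      exact Finset.single_le_sum (f := fun q' : Fin (2*n+1) => ∑ p : Fin n, ‖Ψ (q',p)‖)
        (fun i _ => Finset.sum_nonneg fun j _ => norm_nonneg _) (Finset.mem_univ q)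

lemma EE_open (n k : ℕ) (f : C(QQ n, ℝ)) : IsOpen (EE n k f) := by
  rw [Metric.isOpen_iff]
  rintro Ψ ⟨g, hgc, hgb, hest⟩
  -- the error function attains a maximum strictly below the bound
  set B : ℝ := (n/(n+1)) * ‖f‖ + 1/(k+1) with hB
  have hcont : Continuous fun x : QQ n => |f x - ∑ q : Fin (2*n+1), g q (yval Ψ q x)| := by
    apply Continuous.abs
    apply f.continuous.sub
    apply continuous_finset_sum
    intro q _
    exact (hgc q).comp (yval_continuous Ψ q)
  obtain ⟨x₀, -, hx₀'⟩ := isCompact_univ.exists_isMaxOn univ_nonempty hcont.continuousOn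
  have hx₀ : ∀ y : QQ n, |f y - ∑ q : Fin (2*n+1), g q (yval Ψ q y)|
      ≤ |f x₀ - ∑ q : Fin (2*n+1), g q (yval Ψ q x₀)| := fun y => hx₀' (mem_univ y)
  set τ : ℝ := B - |f x₀ - ∑ q : Fin (2*n+1), g q (yval Ψ q x₀)| with hτ
  have hτ0 : 0 < τ := sub_pos.2 (hest x₀)
  -- uniform continuity of each g q on a large compact interval
  set R : ℝ := (∑ qp : Fin (2*n+1) × Fin n, ‖Ψ qp‖) + n + 1 with hR
  have hR0 : 0 < R := by positivity
  have huc : ∀ q : Fin (2*n+1), ∃ δ > 0, ∀ a ∈ Icc (-R) R, ∀ b ∈ Icc (-R) R,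
      dist a b < δ → dist (g q a) (g q b) < τ / (2*n+1+1) := by
    intro q
    have h1 : UniformContinuousOn (g q) (Icc (-R) R) :=
      IsCompact.uniformContinuousOn_of_continuous isCompact_Icc (hgc q).continuousOn
    have h2 := Metric.uniformContinuousOn_iff.mp h1 (τ / (2*n+1+1)) (by positivity)
    obtain ⟨δ, hδ0, hδ⟩ := h2
    exact ⟨δ, hδ0, fun a ha b hb hab => hδ a ha b hb hab⟩
  choose δg hδg0 hδg using huc
  set δmin : ℝ := (Finset.univ : Finset (Fin (2*n+1))).inf' ⟨0, Finset.mem_univ 0⟩ δg with hδmin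
  have hδmin0 : 0 < δmin := by
    rw [hδmin]
    exact (Finset.lt_inf'_iff _).mpr fun q _ => hδg0 q
  refine ⟨min 1 (δmin / (n+1)), by positivity, ?_⟩
  intro Ψ' hΨ'
  rw [Metric.mem_ball] at hΨ'
  have hd1 : dist Ψ' Ψ ≤ 1 := le_of_lt (lt_of_lt_of_le hΨ' (min_le_left _ _))
  have hdmin : dist Ψ' Ψ < δmin / (n+1) := lt_of_lt_of_le hΨ' (min_le_right _ _)
  refine ⟨g, hgc, hgb, ?_⟩
  intro x
  have key : ∀ q : Fin (2*n+1), |g q (yval Ψ' q x) - g q (yval Ψ q x)| < τ / (2*n+1+1) := by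
    intro q
    have hy1 : |yval Ψ' q x| ≤ R - 1 := by
      have := yval_bound Ψ Ψ' hd1 q x
      rw [hR]; linarith
    have hy2 : |yval Ψ q x| ≤ R - 1 := by
      have := yval_bound Ψ Ψ (by simp) q x
      rw [hR]; linarith
    have hyd : dist (yval Ψ' q x) (yval Ψ q x) < δg q := by
      rw [Real.dist_eq]
      calc |yval Ψ' q x - yval Ψ q x| ≤ n * dist Ψ' Ψ := yval_dist_le Ψ Ψ' q x
      _ ≤ (n+1) * dist Ψ' Ψ := by nlinarith [dist_nonneg (x := Ψ') (y := Ψ)]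
      _ < (n+1) * (δmin / (n+1)) := by
          apply mul_lt_mul_of_pos_left hdmin
          positivity
      _ = δmin := by field_simp
      _ ≤ δg q := Finset.inf'_le _ (Finset.mem_univ q)
    have hmem1 : yval Ψ' q x ∈ Icc (-R) R := by
      rw [mem_Icc]
      rw [abs_le] at hy1
      constructor <;> linarith [hy1.1, hy1.2]
    have hmem2 : yval Ψ q x ∈ Icc (-R) R := by
      rw [mem_Icc]
      rw [abs_le] at hy2
      constructor <;> linarith [hy2.1, hy2.2]
    have := hδg q _ hmem1 _ hmem2 hyd
    rwa [Real.dist_eq] at this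
  calc |f x - ∑ q : Fin (2*n+1), g q (yval Ψ' q x)|
      ≤ |f x - ∑ q : Fin (2*n+1), g q (yval Ψ q x)|
        + |∑ q : Fin (2*n+1), (g q (yval Ψ' q x) - g q (yval Ψ q x))| := by
        rw [Finset.sum_sub_distrib]
        have : f x - ∑ q : Fin (2*n+1), g q (yval Ψ' q x)
            = (f x - ∑ q : Fin (2*n+1), g q (yval Ψ q x))
              - ((∑ q : Fin (2*n+1), g q (yval Ψ' q x))
                - ∑ q : Fin (2*n+1), g q (yval Ψ q x)) := by ring
        rw [this]
        exact abs_sub _ _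
  _ ≤ |f x - ∑ q : Fin (2*n+1), g q (yval Ψ q x)|
        + ∑ q : Fin (2*n+1), |g q (yval Ψ' q x) - g q (yval Ψ q x)| := by
        have := Finset.abs_sum_le_sum_abs
          (fun q : Fin (2*n+1) => g q (yval Ψ' q x) - g q (yval Ψ q x)) Finset.univ
        linarith
  _ < |f x - ∑ q : Fin (2*n+1), g q (yval Ψ q x)| + τ := by
        have hsum : ∑ q : Fin (2*n+1), |g q (yval Ψ' q x) - g q (yval Ψ q x)|
            < ∑ _q : Fin (2*n+1), (τ / (2*n+1+1)) := by
          apply Finset.sum_lt_sum_of_nonempty ⟨0, Finset.mem_univ 0⟩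
          intro q _
          exact key q
        have h2 : (0:ℝ) < 2*(n:ℝ)+1+1 := by positivity
        have : ∑ _q : Fin (2*n+1), (τ / (2*n+1+1)) < τ := by
          rw [Finset.sum_const, Finset.card_univ, Fintype.card_fin, nsmul_eq_mul]
          push_cast
          rw [← mul_div_assoc, div_lt_iff₀ h2]
          nlinarith
        linarith
  _ ≤ B := by
        have := hx₀ x
        rw [hτ] at *
        linarith

section Bump

variable {ι : Type*} [Fintype ι]

lemma bump_le_one {ρ y s : ℝ} (hρ : 0 < ρ) : max 0 (1 - |y - s|/ρ) ≤ 1 :=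
  max_le zero_le_one (by
    have : 0 ≤ |y - s|/ρ := by positivity
    linarith)

lemma bump_nonneg (ρ y s : ℝ) : 0 ≤ max 0 (1 - |y - s|/ρ) := le_max_left _ _

lemma bump_eq_zero {ρ y s : ℝ} (hρ : 0 < ρ) (h : ρ ≤ |y - s|) :
    max 0 (1 - |y - s|/ρ) = 0 := by
  apply max_eq_left
  have : 1 ≤ |y - s|/ρ := (one_le_div hρ).2 h
  linarith

lemma bump_sum_le_one [DecidableEq ι] (S : ι → ℝ) (ρ : ℝ) (hρ : 0 < ρ)
    (hsep : ∀ i j, i ≠ j → 2*ρ ≤ |S i - S j|) (y : ℝ) :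
    ∑ i, max 0 (1 - |y - S i|/ρ) ≤ 1 := by
  by_cases hex : ∃ i, |y - S i| < ρ
  · obtain ⟨i₀, hi₀⟩ := hex
    have hz : ∀ j ∈ Finset.univ, j ≠ i₀ → max 0 (1 - |y - S j|/ρ) = 0 := by
      intro j _ hj
      apply bump_eq_zero hρ
      have h1 := hsep i₀ j (Ne.symm hj)
      have h2 : |S i₀ - S j| ≤ |y - S i₀| + |y - S j| := by
        calc |S i₀ - S j| = |(y - S j) - (y - S i₀)| := by ring_nf
        _ ≤ |y - S j| + |y - S i₀| := abs_sub _ _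
        _ = |y - S i₀| + |y - S j| := by ring
      linarith
    rw [Finset.sum_eq_single i₀ (fun j hj hne => hz j hj hne) (fun h => absurd (Finset.mem_univ i₀) h)]
    exact bump_le_one hρ
  · push_neg at hex
    have : ∀ i ∈ Finset.univ, max 0 (1 - |y - S i|/ρ) = 0 :=
      fun i _ => bump_eq_zero hρ (hex i)
    rw [Finset.sum_eq_zero this]
    norm_num

lemma bump_interp_bound [DecidableEq ι] (S : ι → ℝ) (ρ : ℝ) (hρ : 0 < ρ)
    (hsep : ∀ i j, i ≠ j → 2*ρ ≤ |S i - S j|) (a : ι → ℝ) (C : ℝ) (hC : 0 ≤ C)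
    (ha : ∀ i, |a i| ≤ C) (y : ℝ) :
    |∑ i, a i * max 0 (1 - |y - S i|/ρ)| ≤ C := by
  calc |∑ i, a i * max 0 (1 - |y - S i|/ρ)|
      ≤ ∑ i, |a i * max 0 (1 - |y - S i|/ρ)| := Finset.abs_sum_le_sum_abs _ _
  _ ≤ ∑ i, C * max 0 (1 - |y - S i|/ρ) := by
      apply Finset.sum_le_sum
      intro i _
      rw [abs_mul, abs_of_nonneg (bump_nonneg ρ y (S i))]
      exact mul_le_mul_of_nonneg_right (ha i) (bump_nonneg ρ y (S i))
  _ = C * ∑ i, max 0 (1 - |y - S i|/ρ) := (Finset.mul_sum _ _ _).symm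
  _ ≤ C * 1 := mul_le_mul_of_nonneg_left (bump_sum_le_one S ρ hρ hsep y) hC
  _ = C := mul_one C

lemma bump_interp_eval [DecidableEq ι] (S : ι → ℝ) (ρ : ℝ) (hρ : 0 < ρ)
    (hsep : ∀ i j, i ≠ j → 2*ρ ≤ |S i - S j|) (a : ι → ℝ) (i₀ : ι) :
    ∑ i, a i * max 0 (1 - |S i₀ - S i|/ρ) = a i₀ := by
  rw [Finset.sum_eq_single i₀]
  · simp
  · intro j _ hj
    have h1 := hsep i₀ j (Ne.symm hj)
    rw [bump_eq_zero hρ (by linarith), mul_zero]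
  · intro h
    exact absurd (Finset.mem_univ i₀) h

lemma bump_interp_continuous [DecidableEq ι] (S : ι → ℝ) (ρ : ℝ) (a : ι → ℝ) :
    Continuous (fun y => ∑ i, a i * max 0 (1 - |y - S i|/ρ)) := by
  apply continuous_finset_sum
  intro i _
  apply Continuous.mul continuous_const
  apply Continuous.max continuous_const
  apply Continuous.sub continuous_const
  exact ((continuous_id.sub continuous_const).abs).div_const ρ

end Bump

/-! ### The density construction -/

/-- The value of the perturbed inner sum on the cube indexed by `J`. -/
noncomputable def sval {n : ℕ} (Ψ0 : XX n) (N : ℕ) (δ : ℝ) (q : Fin (2*n+1))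
    (J : Fin n → ℤ) : ℝ :=
  ∑ p : Fin n, (Ψ0 (q,p) (clmpI (cen (2*n+1) N q (J p)))
    + δ * ((N:ℝ)+2)^(p:ℕ) * cen (2*n+1) N q (J p))

/-- The (clamped) center point of the cube indexed by `J`. -/
noncomputable def zpt (n : ℕ) (N : ℕ) (q : Fin (2*n+1)) (J : Fin n → ℤ) : QQ n :=
  ⟨fun p => clmp (cen (2*n+1) N q (J p)),
    ⟨fun p => (clmp_mem _).1, fun p => (clmp_mem _).2⟩⟩

/-- The "bad" values of `δ` which could cause collisions. -/
noncomputable def badd {n : ℕ} (Ψ0 : XX n) (N : ℕ)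
    (t : Fin (2*n+1) × (Fin n → (Finset.Icc (-1:ℤ) (N:ℤ))) × (Fin n → (Finset.Icc (-1:ℤ) (N:ℤ)))) : ℝ :=
  ((N:ℝ) * ((∑ p : Fin n, Ψ0 (t.1,p) (clmpI (cen (2*n+1) N t.1 ((t.2.2 p : ℤ)))))
    - ∑ p : Fin n, Ψ0 (t.1,p) (clmpI (cen (2*n+1) N t.1 ((t.2.1 p : ℤ))))))
  / ((∑ p : Fin n, ((N:ℝ)+2)^(p:ℕ) * (((t.2.1 p : ℤ) : ℝ) - ((t.2.2 p : ℤ) : ℝ))))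

lemma sval_inj {n : ℕ} (Ψ0 : XX n) (N : ℕ) (hN : 1 ≤ N) (δ : ℝ)
    (hδ : δ ∉ Set.range (badd Ψ0 N)) (q : Fin (2*n+1)) (J J' : Fin n → ℤ)
    (hJ : ∀ p, J p ∈ Finset.Icc (-1:ℤ) (N:ℤ)) (hJ' : ∀ p, J' p ∈ Finset.Icc (-1:ℤ) (N:ℤ))
    (heq : sval Ψ0 N δ q J = sval Ψ0 N δ q J') : J = J' := by
  by_contra hne
  have hN0 : (0:ℝ) < N := by exact_mod_cast hN
  -- the integer difference of base-(N+2) expansions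
  set D : ℤ := ∑ p : Fin n, ((N:ℤ)+2)^(p:ℕ) * (J p - J' p) with hD
  have hDne : D ≠ 0 := by
    intro h0
    apply hne
    funext p
    have hlt : ∀ p : Fin n, |J p - J' p| < (N:ℤ)+2 := by
      intro p
      have h1 := Finset.mem_Icc.mp (hJ p)
      have h2 := Finset.mem_Icc.mp (hJ' p)
      rw [abs_lt]
      omega
    have := digits_inj n ((N:ℤ)+2) (fun p => J p - J' p) hlt (by rw [← hD]; exact h0) p
    omega
  -- center differences
  have hcen : ∀ p : Fin n, cen (2*n+1) N q (J p) - cen (2*n+1) N q (J' p)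
      = ((J p : ℝ) - (J' p : ℝ))/N := by
    intro p
    unfold cen
    field_simp
    ring
  -- expand the equation
  have hkey : δ * ((D:ℝ)/N)
      = (∑ p : Fin n, Ψ0 (q,p) (clmpI (cen (2*n+1) N q (J' p))))
        - ∑ p : Fin n, Ψ0 (q,p) (clmpI (cen (2*n+1) N q (J p))) := by
    unfold sval at heq
    rw [Finset.sum_add_distrib, Finset.sum_add_distrib] at heq
    have hD' : ((D:ℝ)) = ∑ p : Fin n, ((N:ℝ)+2)^(p:ℕ) * ((J p : ℝ) - (J' p : ℝ)) := by
      rw [hD]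
      push_cast
      rfl
    have hdiff : ∑ p : Fin n, δ * ((N:ℝ)+2)^(p:ℕ) * cen (2*n+1) N q (J p)
        - ∑ p : Fin n, δ * ((N:ℝ)+2)^(p:ℕ) * cen (2*n+1) N q (J' p)
        = δ * ((D:ℝ)/N) := by
      rw [← Finset.sum_sub_distrib, hD']
      rw [Finset.sum_div, Finset.mul_sum]
      apply Finset.sum_congr rfl
      intro p _
      rw [← mul_sub, hcen p]
      field_simp
    linarith [heq, hdiff]
  apply hδ
  refine ⟨⟨q, fun p => ⟨J p, hJ p⟩, fun p => ⟨J' p, hJ' p⟩⟩, ?_⟩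
  unfold badd
  simp only
  have hDr : ((D:ℝ)) = ∑ p : Fin n, ((N:ℝ)+2)^(p:ℕ) * ((J p : ℝ) - (J' p : ℝ)) := by
    rw [hD]; push_cast; rfl
  rw [← hDr]
  have hDr0 : ((D:ℝ)) ≠ 0 := Int.cast_ne_zero.mpr hDne
  field_simp at hkey ⊢
  linarith [hkey]

set_option maxHeartbeats 2000000 in
lemma EE_dense (n k : ℕ) (hn : 1 ≤ n) (f : C(QQ n, ℝ)) : Dense (EE n k f) := by
  rw [Metric.dense_iff]
  intro Ψ0 r hr
  classical
  -- accuracy for f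
  set ε₀ : ℝ := 1/(((2*n+1 : ℕ):ℝ) * ((k:ℝ)+1) * 2) with hε₀def
  have hε₀ : 0 < ε₀ := by positivity
  -- uniform continuity of f
  obtain ⟨δf, hδf0, hδf⟩ := Metric.uniformContinuous_iff.mp
    (CompactSpace.uniformContinuous_of_continuous f.continuous) ε₀ hε₀
  -- uniform continuity of the Ψ0 components
  have hucΨ : ∀ qp : Fin (2*n+1) × Fin n, ∃ δ, 0 < δ ∧ ∀ a b : Icc (0:ℝ) 1,
      dist a b < δ → dist (Ψ0 qp a) (Ψ0 qp b) < r/3 := by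
    intro qp
    obtain ⟨δ, hδ0, hδ⟩ := Metric.uniformContinuous_iff.mp
      (CompactSpace.uniformContinuous_of_continuous (Ψ0 qp).continuous) (r/3) (by positivity)
    exact ⟨δ, hδ0, fun a b hab => hδ hab⟩
  choose δψ hδψ0 hδψ using hucΨ
  have hne_i : (Finset.univ : Finset (Fin (2*n+1) × Fin n)).Nonempty :=
    ⟨(0, ⟨0, hn⟩), Finset.mem_univ _⟩
  set δm : ℝ := Finset.inf' Finset.univ hne_i δψ with hδmdef
  have hδm0 : 0 < δm := (Finset.lt_inf'_iff _).mpr fun qp _ => hδψ0 qp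
  -- choice of the rank N
  obtain ⟨N, hNgt⟩ := exists_nat_gt (max (2/δf) (2/δm))
  have hN1 : 1 ≤ N := by
    by_contra hc
    push_neg at hc
    interval_cases N
    · simp only [Nat.cast_zero] at hNgt
      have : (0:ℝ) < 2/δf := by positivity
      have := le_max_left (2/δf) (2/δm)
      linarith
  have hN0 : (0:ℝ) < N := by exact_mod_cast hN1
  have h2Nf : 2/(N:ℝ) < δf := by
    rw [div_lt_iff₀ hN0]
    have h1 : 2/δf < N := lt_of_le_of_lt (le_max_left _ _) hNgt
    rw [div_lt_iff₀ hδf0] at h1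
    linarith [mul_comm δf (N:ℝ)]
  have h2Nm : 2/(N:ℝ) < δm := by
    rw [div_lt_iff₀ hN0]
    have h1 : 2/δm < N := lt_of_le_of_lt (le_max_right _ _) hNgt
    rw [div_lt_iff₀ hδm0] at h1
    linarith [mul_comm δm (N:ℝ)]
  have hm1 : 1 ≤ 2*n+1 := by omega
  -- choice of δ
  set δmax : ℝ := r/(9*((N:ℝ)+2)^n) with hδmaxdef
  have hδmax0 : 0 < δmax := by positivity
  obtain ⟨δ, hδmem⟩ := ((Set.Ioo_infinite hδmax0).diff
    (Set.finite_range (badd Ψ0 N))).nonempty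
  obtain ⟨⟨hδ0, hδlt⟩, hδnr⟩ := hδmem
  -- tuples
  set ΛT := (Fin n → (Finset.Icc (-1:ℤ) (N:ℤ))) with hΛT
  -- the constructed inner functions
  have hΨcont : ∀ qp : Fin (2*n+1) × Fin n, Continuous (fun t : Icc (0:ℝ) 1 =>
      Ψ0 qp (clmpI (sig (2*n+1) N qp.1 (t:ℝ))) + δ * ((N:ℝ)+2)^(qp.2:ℕ) * sig (2*n+1) N qp.1 (t:ℝ)) := by
    intro qp
    have hs : Continuous (fun t : Icc (0:ℝ) 1 => sig (2*n+1) N qp.1 (t:ℝ)) :=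
      (sig_continuous (2*n+1) N qp.1 hm1).comp continuous_subtype_val
    exact ((Ψ0 qp).continuous.comp (clmpI_continuous.comp hs)).add
      ((continuous_const.mul continuous_const).mul hs)
  set Ψ : XX n := fun qp => ⟨_, hΨcont qp⟩ with hΨdef
  -- bounds on sig over [0,1]
  have hsig_bound : ∀ (q : Fin (2*n+1)) (t : ℝ), t ∈ Icc (0:ℝ) 1 →
      |sig (2*n+1) N q.1 t| ≤ 3 := by
    intro q t ht
    have h1 := sig_sub_le (2*n+1) N q.1 hm1 hN1 t
    have hN1' : (1:ℝ) ≤ N := by exact_mod_cast hN1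
    have h2 : (2:ℝ)/N ≤ 2 := by
      rw [div_le_iff₀ hN0]
      nlinarith
    have h3 : |t| ≤ 1 := by
      rw [abs_le]
      exact ⟨by linarith [ht.1], ht.2⟩
    calc |sig (2*n+1) N q.1 t| = |(sig (2*n+1) N q.1 t - t) + t| := by ring_nf
    _ ≤ |sig (2*n+1) N q.1 t - t| + |t| := abs_add_le _ _
    _ ≤ 3 := by linarith
  have hKpow : ∀ p : Fin n, ((N:ℝ)+2)^(p:ℕ) ≤ ((N:ℝ)+2)^n := by
    intro p
    apply pow_le_pow_right₀ (by linarith)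
    exact le_of_lt p.isLt
  -- distance bound : Ψ ∈ ball Ψ0 r
  have hdist : dist Ψ Ψ0 < r := by
    rw [dist_pi_lt_iff hr]
    intro qp
    rw [ContinuousMap.dist_lt_iff hr]
    intro t
    have hsig2 : |sig (2*n+1) N qp.1 (t:ℝ) - (t:ℝ)| ≤ 2/N :=
      sig_sub_le (2*n+1) N qp.1 hm1 hN1 (t:ℝ)
    have hc1 : dist (clmpI (sig (2*n+1) N qp.1 (t:ℝ))) t < δψ qp := by
      rw [Subtype.dist_eq, Real.dist_eq]
      have ht' : clmp (t:ℝ) = (t:ℝ) := clmp_of_mem t.2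
      calc |clmp (sig (2*n+1) N qp.1 (t:ℝ)) - (t:ℝ)|
          = |clmp (sig (2*n+1) N qp.1 (t:ℝ)) - clmp (t:ℝ)| := by rw [ht']
      _ ≤ |sig (2*n+1) N qp.1 (t:ℝ) - (t:ℝ)| := clmp_lipschitz _ _
      _ ≤ 2/N := hsig2
      _ < δm := h2Nm
      _ ≤ δψ qp := Finset.inf'_le _ (Finset.mem_univ qp)
    have h1 : dist (Ψ0 qp (clmpI (sig (2*n+1) N qp.1 (t:ℝ)))) (Ψ0 qp t) < r/3 :=
      hδψ qp _ t hc1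
    have h2 : |δ * ((N:ℝ)+2)^(qp.2:ℕ) * sig (2*n+1) N qp.1 (t:ℝ)| ≤ r/3 := by
      rw [abs_mul, abs_mul]
      have hb1 : |δ| = δ := abs_of_pos hδ0
      have hb2 : |((N:ℝ)+2)^(qp.2:ℕ)| = ((N:ℝ)+2)^(qp.2:ℕ) := abs_of_pos (by positivity)
      rw [hb1, hb2]
      have hb3 := hsig_bound qp.1 (t:ℝ) t.2
      have hb4 := hKpow qp.2
      calc δ * ((N:ℝ)+2)^(qp.2:ℕ) * |sig (2*n+1) N qp.1 (t:ℝ)|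
          ≤ δ * ((N:ℝ)+2)^n * 3 := by
            apply mul_le_mul
            · exact mul_le_mul_of_nonneg_left hb4 (le_of_lt hδ0)
            · exact hb3
            · exact abs_nonneg _
            · positivity
      _ ≤ δmax * ((N:ℝ)+2)^n * 3 := by
            apply mul_le_mul_of_nonneg_right _ (by norm_num)
            exact mul_le_mul_of_nonneg_right (le_of_lt hδlt) (by positivity)
      _ = r/3 := by
            rw [hδmaxdef]
            field_simp
            ring
    rw [Real.dist_eq]
    have hΨt : Ψ qp t = Ψ0 qp (clmpI (sig (2*n+1) N qp.1 (t:ℝ)))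
        + δ * ((N:ℝ)+2)^(qp.2:ℕ) * sig (2*n+1) N qp.1 (t:ℝ) := rfl
    rw [hΨt]
    rw [Real.dist_eq] at h1
    calc |Ψ0 qp (clmpI (sig (2*n+1) N qp.1 (t:ℝ)))
        + δ * ((N:ℝ)+2)^(qp.2:ℕ) * sig (2*n+1) N qp.1 (t:ℝ) - Ψ0 qp t|
        ≤ |Ψ0 qp (clmpI (sig (2*n+1) N qp.1 (t:ℝ))) - Ψ0 qp t|
          + |δ * ((N:ℝ)+2)^(qp.2:ℕ) * sig (2*n+1) N qp.1 (t:ℝ)| := by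
          have : Ψ0 qp (clmpI (sig (2*n+1) N qp.1 (t:ℝ)))
              + δ * ((N:ℝ)+2)^(qp.2:ℕ) * sig (2*n+1) N qp.1 (t:ℝ) - Ψ0 qp t
              = (Ψ0 qp (clmpI (sig (2*n+1) N qp.1 (t:ℝ))) - Ψ0 qp t)
                + δ * ((N:ℝ)+2)^(qp.2:ℕ) * sig (2*n+1) N qp.1 (t:ℝ) := by ring
          rw [this]
          exact abs_add_le _ _
    _ < r/3 + r/3 := by linarith
    _ < r := by linarith
  -- separation of the values
  set SS : Fin (2*n+1) → ΛT → ℝ := fun q J => sval Ψ0 N δ q (fun p => (J p : ℤ)) with hSSdef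
  have hSSinj : ∀ q : Fin (2*n+1), Function.Injective (SS q) := by
    intro q J J' hJJ
    have := sval_inj Ψ0 N hN1 δ hδnr q (fun p => (J p : ℤ)) (fun p => (J' p : ℤ))
      (fun p => (J p).2) (fun p => (J' p).2) hJJ
    funext p
    exact Subtype.ext (congrFun this p)
  have hpairs_ne : (Finset.univ.filter (fun t : ΛT × ΛT => t.1 ≠ t.2)).Nonempty := by
    refine ⟨((fun _ => ⟨-1, ?_⟩), (fun _ => ⟨0, ?_⟩)), ?_⟩
    · rw [Finset.mem_Icc]; omega
    · rw [Finset.mem_Icc]; omega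
    · rw [Finset.mem_filter]
      refine ⟨Finset.mem_univ _, ?_⟩
      intro hc
      have := congrFun hc ⟨0, hn⟩
      simp only [Subtype.mk.injEq] at this
      exact absurd this (by norm_num)
  set ρ : Fin (2*n+1) → ℝ := fun q =>
    ((Finset.univ.filter (fun t : ΛT × ΛT => t.1 ≠ t.2)).inf' hpairs_ne
      (fun t => |SS q t.1 - SS q t.2|)) / 2 with hρdef
  have hρ0 : ∀ q, 0 < ρ q := by
    intro q
    apply div_pos _ (by norm_num)
    apply (Finset.lt_inf'_iff _).mpr
    intro t ht
    rw [Finset.mem_filter] at ht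
    rw [abs_pos, sub_ne_zero]
    exact fun hc => ht.2 (hSSinj q hc)
  have hsep : ∀ q, ∀ J J' : ΛT, J ≠ J' → 2 * ρ q ≤ |SS q J - SS q J'| := by
    intro q J J' hJJ
    rw [hρdef]
    have hmem : (J, J') ∈ Finset.univ.filter (fun t : ΛT × ΛT => t.1 ≠ t.2) := by
      rw [Finset.mem_filter]
      exact ⟨Finset.mem_univ _, hJJ⟩
    have := Finset.inf'_le (fun t : ΛT × ΛT => |SS q t.1 - SS q t.2|) hmem
    linarith
  -- the outer functions
  set g : Fin (2*n+1) → ℝ → ℝ := fun q y =>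
    ∑ J : ΛT, (f (zpt n N q (fun p => (J p : ℤ))) / ((n:ℝ)+1))
      * max 0 (1 - |y - SS q J|/(ρ q)) with hgdef
  have hgc : ∀ q, Continuous (g q) := fun q => bump_interp_continuous _ _ _
  have hCnn : (0:ℝ) ≤ ‖f‖/((n:ℝ)+1) := by positivity
  have hgb : ∀ q y, |g q y| ≤ ‖f‖/((n:ℝ)+1) := by
    intro q y
    apply bump_interp_bound (SS q) (ρ q) (hρ0 q) (hsep q) _ _ hCnn _ y
    intro J
    rw [abs_div, abs_of_pos (by positivity : (0:ℝ) < (n:ℝ)+1)]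
    apply div_le_div_of_nonneg_right _ (by positivity)
    exact (f.norm_coe_le_norm _)
  have hgval : ∀ (q : Fin (2*n+1)) (J : ΛT),
      g q (SS q J) = f (zpt n N q (fun p => (J p : ℤ))) / ((n:ℝ)+1) :=
    fun q J => bump_interp_eval (SS q) (ρ q) (hρ0 q) (hsep q) _ J
  -- conclusion : Ψ ∈ ball ∩ EE
  refine ⟨Ψ, Set.mem_inter (Metric.mem_ball.mpr hdist) ⟨g, hgc, hgb, ?_⟩⟩
  intro x
  -- the good systems at x
  set Gd : Finset (Fin (2*n+1)) :=
    Finset.univ.filter (fun q : Fin (2*n+1) => ∀ p : Fin n, good (2*n+1) N q.1 ((x : Fin n → ℝ) p))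
    with hGddef
  -- each bad q has a bad coordinate, and coordinates determine bad q's injectively
  have hbad_card : (Finset.univ \ Gd).card ≤ n := by
    have hwit : ∀ q ∈ Finset.univ \ Gd, ∃ p : Fin n, ¬ good (2*n+1) N q.1 ((x : Fin n → ℝ) p) := by
      intro q hq
      rw [Finset.mem_sdiff, hGddef, Finset.mem_filter] at hq
      push_neg at hq
      exact hq.2 (Finset.mem_univ q)
    choose pw hpw using hwit
    calc (Finset.univ \ Gd).card ≤ (Finset.univ : Finset (Fin n)).card := by
          apply Finset.card_le_card_of_injOn (fun q => if h : q ∈ Finset.univ \ Gd then pw q h else ⟨0, hn⟩)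
            (fun q _ => Finset.mem_univ _)
          intro q₁ hq₁ q₂ hq₂ hpq
          simp only [Finset.mem_coe] at hq₁ hq₂
          dsimp only at hpq
          rw [dif_pos hq₁, dif_pos hq₂] at hpq
          by_contra hne12
          have hq1lt : q₁.1 < 2*n+1 := q₁.isLt
          have hq2lt : q₂.1 < 2*n+1 := q₂.isLt
          have hvne : q₁.1 ≠ q₂.1 := fun hc => hne12 (Fin.ext hc)
          have := good_or_good (2*n+1) N hm1 hq1lt hq2lt hvne ((x : Fin n → ℝ) (pw q₁ hq₁))
          rcases this with hg | hg
          · exact hpw q₁ hq₁ hg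
          · rw [hpq] at hg
            exact hpw q₂ hq₂ hg
    _ = n := by simp
  have hGd_card : n + 1 ≤ Gd.card := by
    have h1 : (Finset.univ : Finset (Fin (2*n+1))).card = 2*n+1 := by simp
    have h2 : (Finset.univ \ Gd).card = (2*n+1) - Gd.card := by
      rw [Finset.card_sdiff_of_subset (Finset.subset_univ Gd), h1]
    have h3 : Gd.card ≤ 2*n+1 := by
      calc Gd.card ≤ (Finset.univ : Finset (Fin (2*n+1))).card := Finset.card_le_card (Finset.subset_univ Gd)
      _ = 2*n+1 := h1
    omega
  have hGd_card2 : Gd.card ≤ 2*n+1 := by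
    calc Gd.card ≤ (Finset.univ : Finset (Fin (2*n+1))).card := Finset.card_le_card (Finset.subset_univ Gd)
    _ = 2*n+1 := by simp
  -- value of the inner sums on good systems
  have hJmem : ∀ (q : Fin (2*n+1)) (p : Fin n),
      ⌊(N:ℝ)*((x : Fin n → ℝ) p) - (q.1:ℝ)/((2*n+1:ℕ):ℝ)⌋ ∈ Finset.Icc (-1:ℤ) (N:ℤ) :=
    fun q p => floor_mem_Icc (2*n+1) N q.1 hm1 q.isLt _ (coord_mem x p)
  set Jx : Fin (2*n+1) → ΛT := fun q => (fun p => ⟨_, hJmem q p⟩) with hJxdef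
  have hyval : ∀ q ∈ Gd, yval Ψ q x = SS q (Jx q) := by
    intro q hq
    rw [hGddef, Finset.mem_filter] at hq
    have hgood := hq.2
    rw [hSSdef]
    unfold yval sval
    apply Finset.sum_congr rfl
    intro p _
    have hΨav : Ψ (q,p) ⟨(x : Fin n → ℝ) p, coord_mem x p⟩
        = Ψ0 (q,p) (clmpI (sig (2*n+1) N q.1 ((x : Fin n → ℝ) p)))
          + δ * ((N:ℝ)+2)^(p:ℕ) * sig (2*n+1) N q.1 ((x : Fin n → ℝ) p) := rfl
    rw [hΨav]
    have hsigeq : sig (2*n+1) N q.1 ((x : Fin n → ℝ) p)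
        = cen (2*n+1) N q.1 ((Jx q p : ℤ)) := by
      rw [hJxdef]
      exact sig_eq_cen (2*n+1) N q.1 hm1 _ (hgood p)
    rw [hsigeq]
  -- good systems give values near f x
  have hgood_est : ∀ q ∈ Gd, |g q (yval Ψ q x) - f x / ((n:ℝ)+1)| ≤ ε₀ := by
    intro q hq
    rw [hyval q hq, hgval q (Jx q)]
    have hdxz : dist x (zpt n N q (fun p => (Jx q p : ℤ))) < δf := by
      rw [Subtype.dist_eq]
      rw [dist_pi_lt_iff hδf0]
      intro p
      rw [Real.dist_eq]
      have hzv : (zpt n N q (fun p => (Jx q p : ℤ)) : Fin n → ℝ) p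
          = clmp (cen (2*n+1) N q.1 ((Jx q p : ℤ))) := rfl
      rw [hzv]
      rw [hGddef, Finset.mem_filter] at hq
      have hsigeq : sig (2*n+1) N q.1 ((x : Fin n → ℝ) p)
          = cen (2*n+1) N q.1 ((Jx q p : ℤ)) :=
        sig_eq_cen (2*n+1) N q.1 hm1 _ (hq.2 p)
      rw [← hsigeq]
      have hcx : clmp ((x : Fin n → ℝ) p) = (x : Fin n → ℝ) p := clmp_of_mem (coord_mem x p)
      calc |(x : Fin n → ℝ) p - clmp (sig (2*n+1) N q.1 ((x : Fin n → ℝ) p))|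
          = |clmp ((x : Fin n → ℝ) p) - clmp (sig (2*n+1) N q.1 ((x : Fin n → ℝ) p))| := by rw [hcx]
      _ ≤ |(x : Fin n → ℝ) p - sig (2*n+1) N q.1 ((x : Fin n → ℝ) p)| := clmp_lipschitz _ _
      _ = |sig (2*n+1) N q.1 ((x : Fin n → ℝ) p) - (x : Fin n → ℝ) p| := abs_sub_comm _ _
      _ ≤ 2/N := sig_sub_le (2*n+1) N q.1 hm1 hN1 _
      _ < δf := h2Nf
    have hfd : |f x - f (zpt n N q (fun p => (Jx q p : ℤ)))| < ε₀ := by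
      have := hδf hdxz
      rwa [Real.dist_eq] at this
    have hn1 : (1:ℝ) ≤ (n:ℝ)+1 := by
      have : (0:ℝ) ≤ n := Nat.cast_nonneg n
      linarith
    calc |f (zpt n N q (fun p => (Jx q p : ℤ))) / ((n:ℝ)+1) - f x / ((n:ℝ)+1)|
        = |f (zpt n N q (fun p => (Jx q p : ℤ))) - f x| / ((n:ℝ)+1) := by
          rw [div_sub_div_same, abs_div, abs_of_pos (by positivity : (0:ℝ) < (n:ℝ)+1)]
    _ ≤ |f (zpt n N q (fun p => (Jx q p : ℤ))) - f x| := by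
          apply div_le_self (abs_nonneg _) hn1
    _ = |f x - f (zpt n N q (fun p => (Jx q p : ℤ)))| := abs_sub_comm _ _
    _ ≤ ε₀ := le_of_lt hfd
  -- the final estimate
  have hsplit : ∑ q : Fin (2*n+1), g q (yval Ψ q x)
      = (∑ q ∈ Gd, g q (yval Ψ q x)) + ∑ q ∈ Finset.univ \ Gd, g q (yval Ψ q x) := by
    exact ((Finset.sum_sdiff (Finset.subset_univ Gd)).symm).trans (add_comm _ _)
  set c : ℝ := (Gd.card : ℝ) with hcdef
  have hc1 : (n:ℝ)+1 ≤ c := by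
    rw [hcdef]
    exact_mod_cast hGd_card
  have hc2 : c ≤ 2*(n:ℝ)+1 := by
    rw [hcdef]
    have := hGd_card2
    push_cast
    exact_mod_cast this
  have hT1 : |f x - ∑ q ∈ Gd, f x / ((n:ℝ)+1)| ≤ ‖f‖ * ((c - ((n:ℝ)+1))/((n:ℝ)+1)) := by
    rw [Finset.sum_const, nsmul_eq_mul, ← hcdef]
    have heq : f x - c * (f x / ((n:ℝ)+1)) = f x * ((((n:ℝ)+1) - c)/((n:ℝ)+1)) := by
      field_simp
    rw [heq, abs_mul]
    have h1 : |f x| ≤ ‖f‖ := f.norm_coe_le_norm x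
    have h2 : |(((n:ℝ)+1) - c)/((n:ℝ)+1)| = (c - ((n:ℝ)+1))/((n:ℝ)+1) := by
      rw [abs_div, abs_of_pos (by positivity : (0:ℝ) < (n:ℝ)+1), abs_of_nonpos (by linarith)]
      ring_nf
    rw [h2]
    apply mul_le_mul_of_nonneg_right h1
    apply div_nonneg (by linarith) (by positivity)
  have hT2 : |∑ q ∈ Gd, (g q (yval Ψ q x) - f x / ((n:ℝ)+1))| ≤ c * ε₀ := by
    calc |∑ q ∈ Gd, (g q (yval Ψ q x) - f x / ((n:ℝ)+1))|
        ≤ ∑ q ∈ Gd, |g q (yval Ψ q x) - f x / ((n:ℝ)+1)| := Finset.abs_sum_le_sum_abs _ _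
    _ ≤ ∑ _q ∈ Gd, ε₀ := Finset.sum_le_sum (fun q hq => hgood_est q hq)
    _ = c * ε₀ := by rw [Finset.sum_const, nsmul_eq_mul, ← hcdef]
  have hT3 : |∑ q ∈ Finset.univ \ Gd, g q (yval Ψ q x)| ≤ ((2*(n:ℝ)+1) - c) * (‖f‖/((n:ℝ)+1)) := by
    calc |∑ q ∈ Finset.univ \ Gd, g q (yval Ψ q x)|
        ≤ ∑ q ∈ Finset.univ \ Gd, |g q (yval Ψ q x)| := Finset.abs_sum_le_sum_abs _ _
    _ ≤ ∑ _q ∈ Finset.univ \ Gd, (‖f‖/((n:ℝ)+1)) := Finset.sum_le_sum (fun q _ => hgb q _)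
    _ = ((Finset.univ \ Gd).card : ℝ) * (‖f‖/((n:ℝ)+1)) := by rw [Finset.sum_const, nsmul_eq_mul]
    _ ≤ ((2*(n:ℝ)+1) - c) * (‖f‖/((n:ℝ)+1)) := by
          apply mul_le_mul_of_nonneg_right _ hCnn
          have h2 : (Finset.univ \ Gd).card = (2*n+1) - Gd.card := by
            rw [Finset.card_sdiff_of_subset (Finset.subset_univ Gd)]
            simp
          rw [h2]
          rw [hcdef]
          push_cast [Nat.cast_sub hGd_card2]
          linarith
  have hdecomp : f x - ∑ q : Fin (2*n+1), g q (yval Ψ q x)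
      = (f x - ∑ q ∈ Gd, f x / ((n:ℝ)+1))
        - (∑ q ∈ Gd, (g q (yval Ψ q x) - f x / ((n:ℝ)+1)))
        - ∑ q ∈ Finset.univ \ Gd, g q (yval Ψ q x) := by
    rw [hsplit, Finset.sum_sub_distrib]
    ring
  have htotal : |f x - ∑ q : Fin (2*n+1), g q (yval Ψ q x)|
      ≤ ‖f‖ * ((c - ((n:ℝ)+1))/((n:ℝ)+1)) + c * ε₀ + ((2*(n:ℝ)+1) - c) * (‖f‖/((n:ℝ)+1)) := by
    rw [hdecomp]
    calc |(f x - ∑ q ∈ Gd, f x / ((n:ℝ)+1))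
        - (∑ q ∈ Gd, (g q (yval Ψ q x) - f x / ((n:ℝ)+1)))
        - ∑ q ∈ Finset.univ \ Gd, g q (yval Ψ q x)|
        ≤ |(f x - ∑ q ∈ Gd, f x / ((n:ℝ)+1))
          - (∑ q ∈ Gd, (g q (yval Ψ q x) - f x / ((n:ℝ)+1)))|
          + |∑ q ∈ Finset.univ \ Gd, g q (yval Ψ q x)| := abs_sub _ _
    _ ≤ |f x - ∑ q ∈ Gd, f x / ((n:ℝ)+1)|
          + |∑ q ∈ Gd, (g q (yval Ψ q x) - f x / ((n:ℝ)+1))|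
          + |∑ q ∈ Finset.univ \ Gd, g q (yval Ψ q x)| := by
          have := abs_sub (f x - ∑ q ∈ Gd, f x / ((n:ℝ)+1))
            (∑ q ∈ Gd, (g q (yval Ψ q x) - f x / ((n:ℝ)+1)))
          linarith
    _ ≤ _ := by
          have := hT1
          have := hT2
          have := hT3
          linarith
  -- arithmetic wrap-up
  have hnorm_nn : (0:ℝ) ≤ ‖f‖ := norm_nonneg f
  have harith : ‖f‖ * ((c - ((n:ℝ)+1))/((n:ℝ)+1)) + ((2*(n:ℝ)+1) - c) * (‖f‖/((n:ℝ)+1))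
      = ((n:ℝ)/((n:ℝ)+1)) * ‖f‖ := by
    field_simp
    ring
  have hfin : c * ε₀ < 1/((k:ℝ)+1) := by
    rw [hε₀def]
    push_cast
    have h1 : c * (1/((2*(n:ℝ)+1) * ((k:ℝ)+1) * 2)) ≤ (2*(n:ℝ)+1) * (1/((2*(n:ℝ)+1) * ((k:ℝ)+1) * 2)) := by
      apply mul_le_mul_of_nonneg_right hc2
      positivity
    have h2 : (2*(n:ℝ)+1) * (1/((2*(n:ℝ)+1) * ((k:ℝ)+1) * 2)) = 1/(((k:ℝ)+1)*2) := by
      field_simp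
    have h3 : 1/(((k:ℝ)+1)*2) < 1/((k:ℝ)+1) := by
      apply div_lt_div_of_pos_left one_pos (by positivity)
      nlinarith [(Nat.cast_nonneg k : (0:ℝ) ≤ (k:ℝ))]
    calc c * (1/((2*(n:ℝ)+1) * ((k:ℝ)+1) * 2)) ≤ 1/(((k:ℝ)+1)*2) := by rw [← h2]; exact h1
    _ < 1/((k:ℝ)+1) := h3
  calc |f x - ∑ q : Fin (2*n+1), g q (yval Ψ q x)|
      ≤ ‖f‖ * ((c - ((n:ℝ)+1))/((n:ℝ)+1)) + c * ε₀ + ((2*(n:ℝ)+1) - c) * (‖f‖/((n:ℝ)+1)) := htotal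
  _ = ((n:ℝ)/((n:ℝ)+1)) * ‖f‖ + c * ε₀ := by rw [← harith]; ring
  _ < ((n:ℝ)/((n:ℝ)+1)) * ‖f‖ + 1/((k:ℝ)+1) := by linarith

/-! ### Baire category assembly -/

set_option synthInstance.maxHeartbeats 1000000 in
lemma exists_good_Psi (n : ℕ) (hn : 1 ≤ n) :
    ∃ Ψ : XX n, ∀ f ∈ (Classical.choose (TopologicalSpace.exists_countable_dense (C(QQ n, ℝ)))),
      ∀ k : ℕ, Ψ ∈ EE n k f := by
  classical
  set D := Classical.choose (TopologicalSpace.exists_countable_dense (C(QQ n, ℝ))) with hD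
  obtain ⟨hDc, hDd⟩ := Classical.choose_spec (TopologicalSpace.exists_countable_dense (C(QQ n, ℝ)))
  have : Countable D := hDc.to_subtype
  have hdense : Dense (⋂ fk : D × ℕ, EE n fk.2 fk.1) :=
    dense_iInter_of_isOpen (fun fk => EE_open n fk.2 fk.1)
      (fun fk => EE_dense n fk.2 hn fk.1)
  obtain ⟨Ψ, hΨ⟩ := hdense.nonempty
  refine ⟨Ψ, fun f hf k => ?_⟩
  have := Set.mem_iInter.mp hΨ (⟨f, hf⟩, k)
  exact this

/-- One-step approximation with geometric decay factor. -/
lemma one_step (n : ℕ) (hn : 1 ≤ n) :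
    ∃ Ψ : XX n, ∀ u : C(QQ n, ℝ), ∃ g : Fin (2*n+1) → ℝ → ℝ,
      (∀ q, Continuous (g q)) ∧ (∀ q y, |g q y| ≤ ‖u‖) ∧
      ∀ x : QQ n, |u x - ∑ q : Fin (2*n+1), g q (yval Ψ q x)|
        ≤ (1 - 1/(4*((n:ℝ)+1))) * ‖u‖ := by
  classical
  obtain ⟨Ψ, hΨ⟩ := exists_good_Psi n hn
  set D := Classical.choose (TopologicalSpace.exists_countable_dense (C(QQ n, ℝ))) with hD
  obtain ⟨hDc, hDd⟩ := Classical.choose_spec (TopologicalSpace.exists_countable_dense (C(QQ n, ℝ)))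
  refine ⟨Ψ, fun u => ?_⟩
  set ν : ℝ := (n:ℝ) with hν
  have hν1 : (1:ℝ) ≤ ν := by rw [hν]; exact_mod_cast hn
  set ε : ℝ := 1/(4*(ν+1)) with hε
  have hε0 : 0 < ε := by positivity
  by_cases hu : ‖u‖ = 0
  · refine ⟨fun _ _ => 0, fun q => continuous_const, fun q y => by simp, fun x => ?_⟩
    have hux : u x = 0 := by
      have h1 : |u x| ≤ ‖u‖ := u.norm_coe_le_norm x
      rw [hu] at h1
      have := abs_nonneg (u x)
      have : |u x| = 0 := le_antisymm h1 (abs_nonneg _)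
      exact abs_eq_zero.mp this
    simp [hux, hu]
  · have hu0 : 0 < ‖u‖ := lt_of_le_of_ne (norm_nonneg u) (Ne.symm hu)
    obtain ⟨f, hfball, hfD⟩ := Metric.dense_iff.mp hDd u (ε * ‖u‖) (by positivity)
    rw [Metric.mem_ball] at hfball
    obtain ⟨k, hk⟩ := exists_nat_one_div_lt (show (0:ℝ) < ε * ‖u‖ by positivity)
    obtain ⟨g, hgc, hgb, hest⟩ := hΨ f hfD k
    have hdfu : dist f u < ε * ‖u‖ := hfball
    have hfnorm : ‖f‖ ≤ (1+ε) * ‖u‖ := by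
      have h1 : ‖f‖ - ‖u‖ ≤ ‖f - u‖ := norm_sub_norm_le f u
      have h2 : ‖f - u‖ = dist f u := (dist_eq_norm f u).symm
      nlinarith
    have hptfu : ∀ x : QQ n, |f x - u x| ≤ dist f u := by
      intro x
      have := ContinuousMap.dist_apply_le_dist (f := f) (g := u) x
      rwa [Real.dist_eq] at this
    refine ⟨g, hgc, ?_, ?_⟩
    · intro q y
      calc |g q y| ≤ ‖f‖/(ν+1) := hgb q y
      _ ≤ (1+ε) * ‖u‖/(ν+1) := by
          gcongr
      _ ≤ ‖u‖ := by
          have hεle : ε ≤ 1 := by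
            rw [hε, div_le_one (by positivity)]
            linarith
          rw [div_le_iff₀ (by positivity : (0:ℝ) < ν+1)]
          nlinarith [hεle, hν1, hu0]
    · intro x
      have h1 := hest x
      have h2 := hptfu x
      have hkk : 1/((k:ℝ)+1) < ε * ‖u‖ := hk
      have key : |u x - ∑ q : Fin (2*n+1), g q (yval Ψ q x)|
          ≤ ε * ‖u‖ + ((ν/(ν+1)) * ‖f‖ + 1/((k:ℝ)+1)) := by
        calc |u x - ∑ q : Fin (2*n+1), g q (yval Ψ q x)|
            ≤ |u x - f x| + |f x - ∑ q : Fin (2*n+1), g q (yval Ψ q x)| := by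
              have : u x - ∑ q : Fin (2*n+1), g q (yval Ψ q x)
                  = (u x - f x) + (f x - ∑ q : Fin (2*n+1), g q (yval Ψ q x)) := by ring
              rw [this]
              exact abs_add_le _ _
        _ ≤ ε * ‖u‖ + ((ν/(ν+1)) * ‖f‖ + 1/((k:ℝ)+1)) := by
              have h3 : |u x - f x| ≤ ε * ‖u‖ := by
                rw [abs_sub_comm]
                linarith
              linarith [le_of_lt h1]
      have hfrac : ν/(ν+1) ≤ 1 := by
        rw [div_le_one (by positivity)]
        linarith
      have hfin : ε * ‖u‖ + ((ν/(ν+1)) * ‖f‖ + 1/((k:ℝ)+1)) ≤ (1 - ε) * ‖u‖ := by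
        have hb1 : (ν/(ν+1)) * ‖f‖ ≤ (ν/(ν+1)) * ((1+ε) * ‖u‖) :=
          mul_le_mul_of_nonneg_left hfnorm (by positivity)
        have hεid : ε * (4*(ν+1)) = 1 := by rw [hε]; field_simp
        have hdiv : ν*(1+ε)/(ν+1) * (ν+1) = ν*(1+ε) := by field_simp
        have hcoef : ε + ν*(1+ε)/(ν+1) + ε ≤ 1 - ε := by
          nlinarith [hdiv, hεid, hν1, hε0]
        have hgoal : ε * ‖u‖ + (ν/(ν+1)) * ((1+ε) * ‖u‖) + ε * ‖u‖ ≤ (1 - ε) * ‖u‖ := by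
          have hexp : ε * ‖u‖ + (ν/(ν+1)) * ((1+ε) * ‖u‖) + ε * ‖u‖
              = (ε + ν*(1+ε)/(ν+1) + ε) * ‖u‖ := by ring
          rw [hexp]
          exact mul_le_mul_of_nonneg_right hcoef (norm_nonneg u)
        linarith [hb1, le_of_lt hkk]
      calc |u x - ∑ q : Fin (2*n+1), g q (yval Ψ q x)|
          ≤ ε * ‖u‖ + ((ν/(ν+1)) * ‖f‖ + 1/((k:ℝ)+1)) := key
      _ ≤ (1 - ε) * ‖u‖ := hfin
      _ = (1 - 1/(4*(ν+1))) * ‖u‖ := by rw [hε]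

end KA

/-- **Kolmogorov–Arnold representation theorem (Kolmogorov 1957, Arnold 1957).**
Let `n ≥ 1` and let `f : [0,1]ⁿ → ℝ` be continuous. Then there exist continuous
univariate functions `Φ_q : ℝ → ℝ` (`q = 1, …, 2n+1`) and continuous univariate
functions `φ_{qp} : [0,1] → ℝ` (`q = 1, …, 2n+1`, `p = 1, …, n`) such that for every
`x = (x_1, …, x_n) ∈ [0,1]ⁿ`,
`f x = ∑_{q=1}^{2n+1} Φ_q (∑_{p=1}^{n} φ_{qp} (x_p))`. -/
theorem kolmogorov_arnold_representation
    (n : ℕ) (hn : 1 ≤ n)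
    (f : (Fin n → ℝ) → ℝ)
    (hf : ContinuousOn f (Set.Icc (0 : Fin n → ℝ) 1)) :
    ∃ (Φ : Fin (2 * n + 1) → ℝ → ℝ) (φ : Fin (2 * n + 1) → Fin n → ℝ → ℝ),
      (∀ q, Continuous (Φ q)) ∧
      (∀ q p, ContinuousOn (φ q p) (Set.Icc (0 : ℝ) 1)) ∧
      ∀ x ∈ Set.Icc (0 : Fin n → ℝ) 1,
        f x = ∑ q : Fin (2 * n + 1), Φ q (∑ p : Fin n, φ q p (x p)) := by
  classical
  obtain ⟨Ψ, hΨ⟩ := KA.one_step n hn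
  choose G hGc hGb hGest using hΨ
  set θ : ℝ := 1 - 1/(4*((n:ℝ)+1)) with hθdef
  have hn0 : (0:ℝ) ≤ n := Nat.cast_nonneg n
  have hθ0 : 0 ≤ θ := by
    rw [hθdef]
    have h1 : 1/(4*((n:ℝ)+1)) ≤ 1 := by
      rw [div_le_one (by positivity)]
      linarith
    linarith
  have hθ1 : θ < 1 := by
    rw [hθdef]
    have h1 : 0 < 1/(4*((n:ℝ)+1)) := by positivity
    linarith
  set u0 : C(KA.QQ n, ℝ) := ⟨(KA.QQ n).restrict f, hf.restrict⟩ with hu0def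
  have hstepc : ∀ u : C(KA.QQ n, ℝ),
      Continuous (fun x : KA.QQ n => ∑ q : Fin (2*n+1), G u q (KA.yval Ψ q x)) :=
    fun u => continuous_finset_sum _ (fun q _ => (hGc u q).comp (KA.yval_continuous Ψ q))
  set step : C(KA.QQ n, ℝ) → C(KA.QQ n, ℝ) := fun u => u - ⟨_, hstepc u⟩ with hstepdef
  set useq : ℕ → C(KA.QQ n, ℝ) := fun r => step^[r] u0 with huseqdef
  have huseq0 : useq 0 = u0 := rfl
  have huseq_succ : ∀ r, useq (r+1) = step (useq r) := fun r =>
    Function.iterate_succ_apply' step r u0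
  have hstep_apply : ∀ (u : C(KA.QQ n, ℝ)) (x : KA.QQ n),
      step u x = u x - ∑ q : Fin (2*n+1), G u q (KA.yval Ψ q x) := by
    intro u x
    rw [hstepdef]
    rfl
  have hstep_norm : ∀ u : C(KA.QQ n, ℝ), ‖step u‖ ≤ θ * ‖u‖ := by
    intro u
    rw [ContinuousMap.norm_le _ (mul_nonneg hθ0 (norm_nonneg u))]
    intro x
    rw [Real.norm_eq_abs, hstep_apply u x]
    exact hGest u x
  have hnorm : ∀ r, ‖useq r‖ ≤ θ^r * ‖u0‖ := by
    intro r
    induction r with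
    | zero => simp [huseq0]
    | succ r ih =>
      rw [huseq_succ r]
      calc ‖step (useq r)‖ ≤ θ * ‖useq r‖ := hstep_norm (useq r)
      _ ≤ θ * (θ^r * ‖u0‖) := mul_le_mul_of_nonneg_left ih hθ0
      _ = θ^(r+1) * ‖u0‖ := by ring
  have hGbound : ∀ (r : ℕ) (q : Fin (2*n+1)) (y : ℝ), |G (useq r) q y| ≤ θ^r * ‖u0‖ :=
    fun r q y => le_trans (hGb (useq r) q y) (hnorm r)
  have hsummable : Summable (fun r : ℕ => θ^r * ‖u0‖) :=
    (summable_geometric_of_lt_one hθ0 hθ1).mul_right _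
  set Φ : Fin (2*n+1) → ℝ → ℝ := fun q y => ∑' r : ℕ, G (useq r) q y with hΦdef
  have hΦc : ∀ q, Continuous (Φ q) := fun q =>
    continuous_tsum (fun r => hGc (useq r) q) hsummable
      (fun r y => by rw [Real.norm_eq_abs]; exact hGbound r q y)
  refine ⟨Φ, fun q p t => Ψ (q,p) (Set.projIcc 0 1 zero_le_one t), hΦc, ?_, ?_⟩
  · intro q p
    exact ((Ψ (q,p)).continuous.comp continuous_projIcc).continuousOn
  · intro x hx
    set xq : KA.QQ n := ⟨x, hx⟩ with hxqdef
    have hyeq : ∀ q : Fin (2*n+1),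
        (∑ p : Fin n, Ψ (q,p) (Set.projIcc 0 1 zero_le_one (x p))) = KA.yval Ψ q xq := by
      intro q
      unfold KA.yval
      apply Finset.sum_congr rfl
      intro p _
      congr 1
      rw [Set.projIcc_of_mem zero_le_one (KA.coord_mem xq p)]
    have hterm : ∀ r, (∑ q : Fin (2*n+1), G (useq r) q (KA.yval Ψ q xq))
        = useq r xq - useq (r+1) xq := by
      intro r
      rw [huseq_succ r, hstep_apply (useq r) xq]
      ring
    have hsumm2 : ∀ q, Summable (fun r => G (useq r) q (KA.yval Ψ q xq)) := fun q =>
      Summable.of_norm_bounded hsummable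
        (fun r => by rw [Real.norm_eq_abs]; exact hGbound r q _)
    have hswap : ∑ q : Fin (2*n+1), Φ q (KA.yval Ψ q xq)
        = ∑' r : ℕ, ∑ q : Fin (2*n+1), G (useq r) q (KA.yval Ψ q xq) :=
      (Summable.tsum_finsetSum (fun q _ => hsumm2 q)).symm
    have hxlim : Filter.Tendsto (fun R => useq R xq) Filter.atTop (nhds 0) := by
      apply squeeze_zero_norm (fun R => ?_)
        (by simpa using (tendsto_pow_atTop_nhds_zero_of_lt_one hθ0 hθ1).mul_const ‖u0‖)
      rw [Real.norm_eq_abs]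
      calc |useq R xq| ≤ ‖useq R‖ := (useq R).norm_coe_le_norm xq
      _ ≤ θ^R * ‖u0‖ := hnorm R
    have htel : ∑' r : ℕ, (useq r xq - useq (r+1) xq) = u0 xq := by
      have hsum3 : Summable (fun r => useq r xq - useq (r+1) xq) := by
        apply Summable.of_norm_bounded (hsummable.mul_left 2)
        intro r
        rw [Real.norm_eq_abs]
        have h1 : |useq r xq| ≤ θ^r * ‖u0‖ := le_trans ((useq r).norm_coe_le_norm xq) (hnorm r)
        have h2 : |useq (r+1) xq| ≤ θ^(r+1) * ‖u0‖ :=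
          le_trans ((useq (r+1)).norm_coe_le_norm xq) (hnorm (r+1))
        have h3 : θ^(r+1) * ‖u0‖ ≤ θ^r * ‖u0‖ := by
          apply mul_le_mul_of_nonneg_right _ (norm_nonneg u0)
          calc θ^(r+1) = θ * θ^r := by ring
          _ ≤ 1 * θ^r := mul_le_mul_of_nonneg_right (le_of_lt hθ1) (pow_nonneg hθ0 r)
          _ = θ^r := one_mul _
        calc |useq r xq - useq (r+1) xq| ≤ |useq r xq| + |useq (r+1) xq| := abs_sub _ _
        _ ≤ 2 * (θ^r * ‖u0‖) := by linarith
      apply HasSum.tsum_eq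
      rw [hsum3.hasSum_iff_tendsto_nat]
      have hps : ∀ R, ∑ r ∈ Finset.range R, (useq r xq - useq (r+1) xq) = u0 xq - useq R xq := by
        intro R
        rw [Finset.sum_range_sub' (fun r => useq r xq) R, huseq0]
      simp only [hps]
      have := Filter.Tendsto.sub (tendsto_const_nhds (x := u0 xq)
        (f := Filter.atTop (α := ℕ))) hxlim
      simpa using this
    have hfinal : f x = u0 xq := rfl
    calc f x = u0 xq := hfinal
    _ = ∑' r : ℕ, (useq r xq - useq (r+1) xq) := htel.symm
    _ = ∑' r : ℕ, ∑ q : Fin (2*n+1), G (useq r) q (KA.yval Ψ q xq) := by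
        apply tsum_congr
        intro r
        rw [hterm r]
    _ = ∑ q : Fin (2*n+1), Φ q (KA.yval Ψ q xq) := hswap.symm
    _ = ∑ q : Fin (2*n+1), Φ q (∑ p : Fin n, Ψ (q,p) (Set.projIcc 0 1 zero_le_one (x p))) := by
        apply Finset.sum_congr rfl
        intro q _
        rw [hyeq q]
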